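/- (Corollary of Theorem 1(i)) For every integer g ≥ 0, the spectral radius of the g-th-order non-backtracking matrix is at most the spectral radius of the adjacency matrix: ρ(B^(g)) ≤ ρ(A). -/

import Mathlib

open Matrix ENNReal

namespace PercNB

variable {V : Type*} [Fintype V] [DecidableEq V]

/-- `p : Fin (g+1) → V` is a length-`g` directed path in the simple graph `G`:
`g+1` pairwise distinct vertices with consecutive vertices adjacent. -/
def IsDiPath (G : SimpleGraph V) (g : ℕ) (p : Fin (g+1) → V) : Prop :=
  Function.Injective p ∧ ∀ k : Fin g, G.Adj (p k.castSucc) (p k.succ)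

instance (G : SimpleGraph V) [DecidableRel G.Adj] (g : ℕ) :
    DecidablePred (IsDiPath G g) := fun p =>
  inferInstanceAs (Decidable (Function.Injective p ∧ ∀ k : Fin g, G.Adj (p k.castSucc) (p k.succ)))

/-- The type of length-`g` directed paths of `G`. -/
abbrev DiPath (G : SimpleGraph V) (g : ℕ) := {p : Fin (g+1) → V // IsDiPath G g p}

/-- The `g`-th-order non-backtracking matrix `B^(g)` of `G`, indexed by the length-`g`
directed paths of `G`: the `(p, q)` entry is `1` if `q k = p (k+1)` for `1 ≤ k ≤ g` and
`(p 1, …, p (g+1), q (g+1))` is a length-`(g+1)` directed path, and `0` otherwise. -/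
def NBM (G : SimpleGraph V) [DecidableRel G.Adj] (g : ℕ) :
    Matrix (DiPath G g) (DiPath G g) ℂ := fun p q =>
  if (∀ k : Fin g, q.1 k.castSucc = p.1 k.succ) ∧
      IsDiPath G (g+1) (Fin.snoc p.1 (q.1 (Fin.last g))) then 1 else 0

/-- The spectral radius of a finite square complex matrix:
the maximum modulus of its eigenvalues (`0` if the index type is empty). -/
noncomputable def specRad {n : Type*} [Fintype n] [DecidableEq n] (X : Matrix n n ℂ) : ℝ≥0∞ :=
  spectralRadius ℂ X

/-- `c : Fin k → V` is a simple cycle of length `k ≥ 3` in `G`: pairwise distinct vertices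
with `c t` adjacent to `c (t+1)` for `1 ≤ t ≤ k-1` and `c k` adjacent to `c 1`. -/
def IsSimpleCycle (G : SimpleGraph V) (k : ℕ) (c : Fin k → V) : Prop :=
  3 ≤ k ∧ Function.Injective c ∧
    ∀ t : Fin k, G.Adj (c t) (c ⟨(t.val + 1) % k, Nat.mod_lt _ t.pos⟩)

/-- The arc relation of the digraph `G^(g)` on the length-`g` directed paths of `G`:
`p → q` exactly when `B^(g)_{p,q} = 1`. -/
def NBArc (G : SimpleGraph V) (g : ℕ) (p q : DiPath G g) : Prop :=
  (∀ k : Fin g, q.1 k.castSucc = p.1 k.succ) ∧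
    IsDiPath G (g+1) (Fin.snoc p.1 (q.1 (Fin.last g)))

/-- The arc relation of the line digraph `L(G^(g-1))` (for `g ≥ 1`), under the identification
of its vertices — the arcs `(i₁,…,i_g) → (i₂,…,i_{g+1})` of `G^(g-1)` — with the length-`g`
directed paths `(i₁,…,i_{g+1})` of `G`: there is an arc `p → q` exactly when the arc
corresponding to `p` ends at the tail of the arc corresponding to `q`, i.e. when
`q k = p (k+1)` for `1 ≤ k ≤ g`. -/
def LineArc (G : SimpleGraph V) (g : ℕ) (p q : DiPath G g) : Prop :=
  ∀ k : Fin g, q.1 k.castSucc = p.1 k.succ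

/-- `c : Fin k → α` is a directed cycle of length `k` with respect to the arc relation `r`:
`k` pairwise distinct vertices with an arc from each to the cyclically next one. -/
def IsDiCycle {α : Type*} (r : α → α → Prop) (k : ℕ) (c : Fin k → α) : Prop :=
  Function.Injective c ∧ ∀ t : Fin k, r (c t) (c ⟨(t.val + 1) % k, Nat.mod_lt _ t.pos⟩)

/-- The type of directed edges of `G`: ordered pairs of adjacent vertices. -/
abbrev DiEdge (G : SimpleGraph V) := {e : V × V // G.Adj e.1 e.2}

/-- The standard non-backtracking matrix `B = B^(1)`, indexed by directed edges:
`B_{(i,j),(k,l)} = 1` iff `j = k`, `l ≠ i` and `j` is adjacent to `l`. -/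
def Bmat (G : SimpleGraph V) [DecidableRel G.Adj] : Matrix (DiEdge G) (DiEdge G) ℂ :=
  fun e f => if e.1.2 = f.1.1 ∧ f.1.2 ≠ e.1.1 ∧ G.Adj e.1.2 f.1.2 then 1 else 0

/-- `(ΔB₁)_{(i,j),(k,l)} = 1` iff `B_{(i,j),(k,l)} = 1` and `i` is adjacent to `l`. -/
def dB1 (G : SimpleGraph V) [DecidableRel G.Adj] : Matrix (DiEdge G) (DiEdge G) ℂ :=
  fun e f => if (e.1.2 = f.1.1 ∧ f.1.2 ≠ e.1.1 ∧ G.Adj e.1.2 f.1.2) ∧ G.Adj e.1.1 f.1.2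
    then 1 else 0

/-- `(ΔB₂)_{(i,j),(k,l)} = 1` iff `l = i` and `j` is adjacent to `k`. -/
def dB2 (G : SimpleGraph V) [DecidableRel G.Adj] : Matrix (DiEdge G) (DiEdge G) ℂ :=
  fun e f => if f.1.2 = e.1.1 ∧ G.Adj e.1.2 f.1.1 then 1 else 0

/-- The diagonal matrix `D_Δ` whose `((i,j),(i,j))` entry is the number of common
neighbours of `i` and `j`. -/
noncomputable def Ddel (G : SimpleGraph V) [DecidableRel G.Adj] :
    Matrix (DiEdge G) (DiEdge G) ℂ :=
  Matrix.diagonal fun e =>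
    ((Finset.univ.filter fun v => G.Adj e.1.1 v ∧ G.Adj e.1.2 v).card : ℂ)

/-- The `8E × 8E` block matrix
`M = [[B, −ΔB₂, D_Δ − I, B − ΔB₁], [I, 0, 0, 0], [0, I, 0, 0], [0, 0, I, 0]]`. -/
noncomputable def Mmat (G : SimpleGraph V) [DecidableRel G.Adj] :
    Matrix ((DiEdge G ⊕ DiEdge G) ⊕ (DiEdge G ⊕ DiEdge G))
      ((DiEdge G ⊕ DiEdge G) ⊕ (DiEdge G ⊕ DiEdge G)) ℂ :=
  Matrix.fromBlocks
    (Matrix.fromBlocks (Bmat G) (-(dB2 G)) 1 0)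
    (Matrix.fromBlocks (Ddel G - 1) (Bmat G - dB1 G) 0 0)
    (Matrix.fromBlocks 0 1 0 0)
    (Matrix.fromBlocks 0 0 1 0)

/-- `x_{(i,j)} = Σ_k ψ_{(i,j,k)}`, the sum over all vertices `k` adjacent to `j` with
`k ≠ i`; equivalently, the sum of `ψ` over all length-2 directed paths starting `(i,j,·)`. -/
noncomputable def xvec (G : SimpleGraph V) [DecidableRel G.Adj] (ψ : DiPath G 2 → ℂ) :
    DiEdge G → ℂ := fun e =>
  ∑ p ∈ Finset.univ.filter (fun p : DiPath G 2 => p.1 0 = e.1.1 ∧ p.1 1 = e.1.2), ψ p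

/-- `y_{(i,j)} = Σ_k ψ_{(i,j,k)}`, the sum over all vertices `k` adjacent to both `i`
and `j`. -/
noncomputable def yvec (G : SimpleGraph V) [DecidableRel G.Adj] (ψ : DiPath G 2 → ℂ) :
    DiEdge G → ℂ := fun e =>
  ∑ p ∈ Finset.univ.filter
    (fun p : DiPath G 2 => p.1 0 = e.1.1 ∧ p.1 1 = e.1.2 ∧ G.Adj e.1.1 (p.1 2)), ψ p

/-- The block vector `z = (x, λ⁻¹x, λ⁻²x, λ⁻³x)`. -/
noncomputable def blockVec {G : SimpleGraph V} (lam : ℂ) (x : DiEdge G → ℂ) :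
    (DiEdge G ⊕ DiEdge G) ⊕ (DiEdge G ⊕ DiEdge G) → ℂ :=
  Sum.elim (Sum.elim x (lam⁻¹ • x)) (Sum.elim ((lam ^ 2)⁻¹ • x) ((lam ^ 3)⁻¹ • x))

/-- The vector `ψ` built from `x`:
`ψ_{(i,j,k)} = (λ²x_{(j,k)} − λx_{(k,i)} + x_{(i,j)})/(λ³+1)` if `i` and `k` are adjacent,
and `ψ_{(i,j,k)} = λ⁻¹ x_{(j,k)}` if `i` and `k` are not adjacent. -/
noncomputable def psiOf (G : SimpleGraph V) [DecidableRel G.Adj] (lam : ℂ)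
    (x : DiEdge G → ℂ) : DiPath G 2 → ℂ := fun p =>
  if h : G.Adj (p.1 0) (p.1 2) then
    (lam ^ 2 * x ⟨(p.1 1, p.1 2), by simpa using p.2.2 1⟩
      - lam * x ⟨(p.1 2, p.1 0), h.symm⟩
      + x ⟨(p.1 0, p.1 1), by simpa using p.2.2 0⟩) / (lam ^ 3 + 1)
  else lam⁻¹ * x ⟨(p.1 1, p.1 2), by simpa using p.2.2 1⟩

/-! ### Auxiliary material for the proof -/

section Aux

open scoped NNReal

attribute [local instance] Matrix.linftyOpNormedRing Matrix.linftyOpNormedAlgebra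

open Filter

variable (G : SimpleGraph V) [DecidableRel G.Adj] (g : ℕ)

/-- `ℝ≥0`-valued version of `NBM`. -/
def NBM0 : Matrix (DiPath G g) (DiPath G g) ℝ≥0 := fun p q =>
  if (∀ k : Fin g, q.1 k.castSucc = p.1 k.succ) ∧
      IsDiPath G (g+1) (Fin.snoc p.1 (q.1 (Fin.last g))) then 1 else 0

/-- Indicator matrix of "the last vertex of the path `p` is `v`". -/
def Smat : Matrix (DiPath G g) V ℝ≥0 := fun p v => if p.1 (Fin.last g) = v then 1 else 0

variable {G g}

lemma arc_adj {p q : DiPath G g}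
    (h : IsDiPath G (g+1) (Fin.snoc p.1 (q.1 (Fin.last g)))) :
    G.Adj (p.1 (Fin.last g)) (q.1 (Fin.last g)) := by
  simpa using h.2 (Fin.last g)

lemma arc_unique {p q1 q2 : DiPath G g} {v : V}
    (h1a : ∀ k : Fin g, q1.1 k.castSucc = p.1 k.succ) (h1b : q1.1 (Fin.last g) = v)
    (h2a : ∀ k : Fin g, q2.1 k.castSucc = p.1 k.succ) (h2b : q2.1 (Fin.last g) = v) :
    q1 = q2 := by
  apply Subtype.ext; funext i
  induction i using Fin.lastCases with
  | last => rw [h1b, h2b]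
  | cast k => rw [h1a k, h2a k]

lemma step_le (p : DiPath G g) (v : V) :
    (NBM0 G g * Smat G g) p v ≤ (Smat G g * G.adjMatrix ℝ≥0) p v := by
  have hR : (Smat G g * G.adjMatrix ℝ≥0) p v
      = if G.Adj (p.1 (Fin.last g)) v then 1 else 0 := by
    rw [Matrix.mul_apply]
    simp only [Smat, ite_mul, one_mul, zero_mul]
    rw [Finset.sum_ite_eq]
    simp
  rw [hR, Matrix.mul_apply]
  have hterm : ∀ q : DiPath G g, NBM0 G g p q * Smat G g q v
      = if ((∀ k : Fin g, q.1 k.castSucc = p.1 k.succ) ∧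
          IsDiPath G (g+1) (Fin.snoc p.1 (q.1 (Fin.last g)))) ∧ q.1 (Fin.last g) = v
        then 1 else 0 := by
    intro q
    unfold NBM0 Smat
    by_cases hc : (∀ k : Fin g, q.1 k.castSucc = p.1 k.succ) ∧
        IsDiPath G (g+1) (Fin.snoc p.1 (q.1 (Fin.last g)))
    · by_cases hl : q.1 (Fin.last g) = v
      · rw [if_pos hc, if_pos hl, if_pos ⟨hc, hl⟩, one_mul]
      · rw [if_pos hc, if_neg hl, mul_zero, if_neg (fun h => hl h.2)]
    · rw [if_neg hc, zero_mul, if_neg (fun h => hc h.1)]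
  simp_rw [hterm]
  by_cases hex : ∃ q : DiPath G g, ((∀ k : Fin g, q.1 k.castSucc = p.1 k.succ) ∧
      IsDiPath G (g+1) (Fin.snoc p.1 (q.1 (Fin.last g)))) ∧ q.1 (Fin.last g) = v
  · obtain ⟨q0, hq0⟩ := hex
    have huniq : ∀ q : DiPath G g, (((∀ k : Fin g, q.1 k.castSucc = p.1 k.succ) ∧
        IsDiPath G (g+1) (Fin.snoc p.1 (q.1 (Fin.last g)))) ∧ q.1 (Fin.last g) = v) → q = q0 :=
      fun q hq => arc_unique hq.1.1 hq.2 hq0.1.1 hq0.2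
    rw [Finset.sum_eq_single_of_mem q0 (Finset.mem_univ _)
      (fun b _ hb => if_neg fun hcb => hb (huniq b hcb))]
    rw [if_pos hq0, if_pos (hq0.2 ▸ arc_adj hq0.1.2)]
  · rw [not_exists] at hex
    rw [Finset.sum_eq_zero (fun q _ => if_neg (hex q))]
    exact zero_le

lemma mul_le_mul_left_mat {α β γ : Type*} [Fintype β] (M : Matrix α β ℝ≥0)
    {X Y : Matrix β γ ℝ≥0} (h : ∀ i j, X i j ≤ Y i j) (i : α) (j : γ) :
    (M * X) i j ≤ (M * Y) i j :=
  Finset.sum_le_sum fun k _ => mul_le_mul_right (h k j) _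

lemma mul_le_mul_right_mat {α β γ : Type*} [Fintype β] {X Y : Matrix α β ℝ≥0}
    (h : ∀ i j, X i j ≤ Y i j) (N : Matrix β γ ℝ≥0) (i : α) (j : γ) :
    (X * N) i j ≤ (Y * N) i j :=
  Finset.sum_le_sum fun k _ => mul_le_mul_left (h i k) _

lemma pow_mul_S_le (k : ℕ) (p : DiPath G g) (v : V) :
    ((NBM0 G g) ^ k * Smat G g) p v ≤ (Smat G g * (G.adjMatrix ℝ≥0) ^ k) p v := by
  induction k generalizing p v with
  | zero => simp
  | succ k ih =>
    have e1 : ((NBM0 G g) ^ (k+1) * Smat G g) p v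
        = (NBM0 G g * ((NBM0 G g) ^ k * Smat G g)) p v := by
      rw [pow_succ', Matrix.mul_assoc]
    rw [e1]
    refine le_trans (mul_le_mul_left_mat _ (fun i j => ih i j) p v) ?_
    have e2 : (NBM0 G g * (Smat G g * (G.adjMatrix ℝ≥0) ^ k)) p v
        = ((NBM0 G g * Smat G g) * (G.adjMatrix ℝ≥0) ^ k) p v := by
      rw [Matrix.mul_assoc]
    rw [e2]
    refine le_trans (mul_le_mul_right_mat (fun i j => step_le i j) _ p v) (le_of_eq ?_)
    rw [Matrix.mul_assoc, ← pow_succ']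

lemma rowsum_le (k : ℕ) (p : DiPath G g) :
    ∑ q, ((NBM0 G g) ^ k) p q ≤ ∑ w, ((G.adjMatrix ℝ≥0) ^ k) (p.1 (Fin.last g)) w := by
  have hS : ∀ q : DiPath G g, ∑ u, Smat G g q u = 1 := fun q => by
    simp [Smat, Finset.sum_ite_eq]
  calc ∑ q, ((NBM0 G g) ^ k) p q
      = ∑ q, ((NBM0 G g) ^ k) p q * ∑ u, Smat G g q u := by simp [hS]
    _ = ∑ u, ((NBM0 G g) ^ k * Smat G g) p u := by
        simp_rw [Finset.mul_sum, Matrix.mul_apply]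
        exact Finset.sum_comm
    _ ≤ ∑ u, (Smat G g * (G.adjMatrix ℝ≥0) ^ k) p u :=
        Finset.sum_le_sum fun u _ => pow_mul_S_le k p u
    _ = ∑ u, ((G.adjMatrix ℝ≥0) ^ k) (p.1 (Fin.last g)) u := by
        refine Finset.sum_congr rfl fun u _ => ?_
        rw [Matrix.mul_apply]
        simp only [Smat, ite_mul, one_mul, zero_mul]
        rw [Finset.sum_ite_eq]
        simp

/-- The canonical ring homomorphism `ℝ≥0 →+* ℂ`. -/
def cR : ℝ≥0 →+* ℂ := Complex.ofRealHom.comp NNReal.toRealHom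

lemma nnnorm_cR (x : ℝ≥0) : ‖cR x‖₊ = x := by
  ext
  simp [cR, Complex.norm_real]

lemma hBmap (G : SimpleGraph V) [DecidableRel G.Adj] (g : ℕ) :
    NBM G g = cR.mapMatrix (NBM0 G g) := by
  ext p q
  simp [NBM, NBM0, RingHom.mapMatrix_apply, Matrix.map_apply, apply_ite cR]

lemma hAmap (G : SimpleGraph V) [DecidableRel G.Adj] :
    G.adjMatrix ℂ = cR.mapMatrix (G.adjMatrix ℝ≥0) := by
  ext v w
  simp [RingHom.mapMatrix_apply, Matrix.map_apply, SimpleGraph.adjMatrix_apply, apply_ite cR]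

lemma norm_pow_le (G : SimpleGraph V) [DecidableRel G.Adj] (g k : ℕ) :
    ‖(NBM G g) ^ k‖₊ ≤ ‖(G.adjMatrix ℂ) ^ k‖₊ := by
  rw [hBmap, hAmap, ← map_pow, ← map_pow, Matrix.linfty_opNNNorm_def,
    Matrix.linfty_opNNNorm_def]
  refine Finset.sup_le fun p _ => ?_
  calc ∑ q, ‖(cR.mapMatrix ((NBM0 G g) ^ k)) p q‖₊
      = ∑ q, ((NBM0 G g) ^ k) p q := by
        simp [RingHom.mapMatrix_apply, Matrix.map_apply, nnnorm_cR]
    _ ≤ ∑ w, ((G.adjMatrix ℝ≥0) ^ k) (p.1 (Fin.last g)) w := rowsum_le k p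
    _ = ∑ w, ‖(cR.mapMatrix ((G.adjMatrix ℝ≥0) ^ k)) (p.1 (Fin.last g)) w‖₊ := by
        simp [RingHom.mapMatrix_apply, Matrix.map_apply, nnnorm_cR]
    _ ≤ _ := Finset.le_sup
        (f := fun v => ∑ w, ‖(cR.mapMatrix ((G.adjMatrix ℝ≥0) ^ k)) v w‖₊)
        (Finset.mem_univ _)

lemma norm_one_le (n : Type*) [Fintype n] [DecidableEq n] :
    ‖(1 : Matrix n n ℂ)‖₊ ≤ 1 := by
  rw [Matrix.linfty_opNNNorm_def]
  refine Finset.sup_le fun p _ => ?_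
  simp [Matrix.one_apply, apply_ite (‖·‖₊ : ℂ → ℝ≥0), Finset.sum_ite_eq]

end Aux

/-- **Corollary of Theorem 1(i).** For every `g ≥ 0`, `ρ(B^(g)) ≤ ρ(A)`. -/
theorem nbm_specRad_le_adj (G : SimpleGraph V) [DecidableRel G.Adj] (g : ℕ) :
    specRad (NBM G g) ≤ specRad (G.adjMatrix ℂ) := by
  letI instB : NormedRing (Matrix (DiPath G g) (DiPath G g) ℂ) := Matrix.linftyOpNormedRing
  letI instBA : NormedAlgebra ℂ (Matrix (DiPath G g) (DiPath G g) ℂ) :=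
    Matrix.linftyOpNormedAlgebra
  letI instA : NormedRing (Matrix V V ℂ) := Matrix.linftyOpNormedRing
  letI instAA : NormedAlgebra ℂ (Matrix V V ℂ) := Matrix.linftyOpNormedAlgebra
  haveI : CompleteSpace (Matrix (DiPath G g) (DiPath G g) ℂ) :=
    FiniteDimensional.complete ℂ _
  haveI : CompleteSpace (Matrix V V ℂ) := FiniteDimensional.complete ℂ _
  have key : ∀ n : ℕ, specRad (NBM G g)
      ≤ (‖(G.adjMatrix ℂ) ^ (n+1)‖₊ : ℝ≥0∞) ^ (1 / ((n : ℝ) + 1)) := by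
    intro n
    have h1 := spectrum.spectralRadius_le_pow_nnnorm_pow_one_div ℂ (NBM G g) n
    refine h1.trans ?_
    have hnn : (0 : ℝ) ≤ 1 / ((n : ℝ) + 1) := by positivity
    have h2 : ((‖(NBM G g) ^ (n+1)‖₊ : ℝ≥0∞)) ^ (1 / ((n : ℝ) + 1))
        ≤ (‖(G.adjMatrix ℂ) ^ (n+1)‖₊ : ℝ≥0∞) ^ (1 / ((n : ℝ) + 1)) :=
      ENNReal.rpow_le_rpow (by exact_mod_cast norm_pow_le G g (n+1)) hnn
    have h3 : ((‖(1 : Matrix (DiPath G g) (DiPath G g) ℂ)‖₊ : ℝ≥0∞)) ^ (1 / ((n : ℝ) + 1))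
        ≤ 1 := by
      calc ((‖(1 : Matrix (DiPath G g) (DiPath G g) ℂ)‖₊ : ℝ≥0∞)) ^ (1 / ((n : ℝ) + 1))
          ≤ (1 : ℝ≥0∞) ^ (1 / ((n : ℝ) + 1)) :=
            ENNReal.rpow_le_rpow (by exact_mod_cast norm_one_le (DiPath G g)) hnn
        _ = 1 := ENNReal.one_rpow _
    calc (‖(NBM G g) ^ (n+1)‖₊ : ℝ≥0∞) ^ (1 / ((n:ℝ) + 1)) *
          (‖(1 : Matrix (DiPath G g) (DiPath G g) ℂ)‖₊ : ℝ≥0∞) ^ (1 / ((n:ℝ) + 1))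
        ≤ (‖(G.adjMatrix ℂ) ^ (n+1)‖₊ : ℝ≥0∞) ^ (1 / ((n:ℝ) + 1)) * 1 := mul_le_mul' h2 h3
      _ = _ := mul_one _
  have tA := spectrum.pow_nnnorm_pow_one_div_tendsto_nhds_spectralRadius (G.adjMatrix ℂ)
  have tA' := tA.comp (Filter.tendsto_add_atTop_nat 1)
  have heq : ((fun n : ℕ => (‖(G.adjMatrix ℂ) ^ n‖₊ : ℝ≥0∞) ^ (1 / (n : ℝ))) ∘ (· + 1))
      = fun n : ℕ => (‖(G.adjMatrix ℂ) ^ (n+1)‖₊ : ℝ≥0∞) ^ (1 / ((n : ℝ) + 1)) := by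
    funext n
    simp only [Function.comp_apply]
    push_cast
    rfl
  rw [heq] at tA'
  exact ge_of_tendsto tA' (Filter.Eventually.of_forall key)

end PercNB
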